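/- Let A, B, C be finite nonempty sets and φ : A → B × C a bijection. Let S and W be random variables on a common finite probability space with S valued in A, and write (K, F) = φ(S). Let U_A be uniformly distributed on A and independent of W, and let U_B be uniformly distributed on B and independent of the pair (F, W). If SD((S, W); (U_A, W)) ≤ δ, then SD((K, F, W); (U_B, F, W)) ≤ 2δ. -/

import Mathlib

open scoped Classical

/-- The probability of an event `E` under the probability mass function `p` on a finite
sample space `Ω`. -/
noncomputable def prOf {Ω : Type*} [Fintype Ω] (p : Ω → ℝ) (E : Ω → Prop) : ℝ :=
  ∑ ω ∈ Finset.univ.filter E, p ω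

/-- Statistical distance `SD(X; Y) = (1/2)·∑_w |P[X = w] − P[Y = w]|` between two random
variables `X Y : Ω → 𝒲` on the finite probability space given by `p`. -/
noncomputable def statDist {Ω : Type*} [Fintype Ω] (p : Ω → ℝ) {𝒲 : Type*} [Fintype 𝒲]
    (X Y : Ω → 𝒲) : ℝ :=
  (1 / 2) * ∑ w : 𝒲, |prOf p (fun ω => X ω = w) - prOf p (fun ω => Y ω = w)|

lemma prOf_congr {Ω : Type*} [Fintype Ω] (p : Ω → ℝ) {E E' : Ω → Prop}
    (h : ∀ ω, E ω ↔ E' ω) : prOf p E = prOf p E' := by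
  unfold prOf
  congr 1
  apply Finset.filter_congr
  intro ω _
  simp [h ω]

lemma prOf_fiber {Ω : Type*} [Fintype Ω] (p : Ω → ℝ) {B : Type*} [Fintype B]
    (X : Ω → B) (E : Ω → Prop) :
    prOf p E = ∑ b, prOf p (fun ω => X ω = b ∧ E ω) := by
  unfold prOf
  simp only [Finset.sum_filter]
  rw [Finset.sum_comm]
  apply Finset.sum_congr rfl
  intro ω _
  by_cases h : E ω <;> simp [h]


/-- Let `A, B, C` be finite nonempty sets and `φ : A → B × C` a bijection.
Let `S` and `W` be random variables on a common finite probability space with `S` valued in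
`A`, and write `(K, F) = φ(S)`.  Let `U_A` be uniform on `A` and independent of `W`, and
`U_B` uniform on `B` and independent of `(F, W)`.  If `SD((S, W); (U_A, W)) ≤ δ`, then
`SD((K, F, W); (U_B, F, W)) ≤ 2δ`. -/
theorem stmt_10 {Ω : Type*} [Fintype Ω] (p : Ω → ℝ)
    (hp0 : ∀ ω, 0 ≤ p ω) (hp1 : ∑ ω, p ω = 1)
    {A B C 𝒲 : Type*} [Fintype A] [Fintype B] [Fintype C] [Fintype 𝒲]
    [Nonempty A] [Nonempty B] [Nonempty C]
    (φ : A → B × C) (hφ : Function.Bijective φ)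
    (S : Ω → A) (W : Ω → 𝒲) (UA : Ω → A) (UB : Ω → B)
    (hUA : ∀ a, prOf p (fun ω => UA ω = a) = 1 / Fintype.card A)
    (hUAW : ∀ a w, prOf p (fun ω => UA ω = a ∧ W ω = w)
      = prOf p (fun ω => UA ω = a) * prOf p (fun ω => W ω = w))
    (hUB : ∀ b, prOf p (fun ω => UB ω = b) = 1 / Fintype.card B)
    (hUBFW : ∀ b c w, prOf p (fun ω => UB ω = b ∧ (φ (S ω)).2 = c ∧ W ω = w)
      = prOf p (fun ω => UB ω = b) * prOf p (fun ω => (φ (S ω)).2 = c ∧ W ω = w))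
    (δ : ℝ)
    (hSD : statDist p (fun ω => (S ω, W ω)) (fun ω => (UA ω, W ω)) ≤ δ) :
    statDist p (fun ω => ((φ (S ω)).1, (φ (S ω)).2, W ω))
      (fun ω => (UB ω, (φ (S ω)).2, W ω)) ≤ 2 * δ := by
  classical
  have hinj : Function.Injective φ := hφ.1
  set nA : ℝ := (Fintype.card A : ℝ) with hnA
  set nB : ℝ := (Fintype.card B : ℝ) with hnB
  set nC : ℝ := (Fintype.card C : ℝ) with hnC
  have hnB0 : 0 < nB := by
    simp [hnB]; exact Fintype.card_pos
  have hnC0 : 0 < nC := by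
    simp [hnC]; exact Fintype.card_pos
  have hcard : nA = nB * nC := by
    have h1 : Fintype.card A = Fintype.card (B × C) := Fintype.card_of_bijective hφ
    simp [hnA, hnB, hnC, h1, Fintype.card_prod]
  set r : 𝒲 → ℝ := fun w => prOf p (fun ω => W ω = w) with hr
  set g : B → C → 𝒲 → ℝ := fun b c w => prOf p (fun ω => φ (S ω) = (b, c) ∧ W ω = w) with hg
  set q : C → 𝒲 → ℝ := fun c w => prOf p (fun ω => (φ (S ω)).2 = c ∧ W ω = w) with hqdef
  have hq : ∀ c w, q c w = ∑ b, g b c w := by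
    intro c w
    show prOf p (fun ω => (φ (S ω)).2 = c ∧ W ω = w) = ∑ b, g b c w
    rw [prOf_fiber p (fun ω => (φ (S ω)).1) (fun ω => (φ (S ω)).2 = c ∧ W ω = w)]
    apply Finset.sum_congr rfl
    intro b _
    apply prOf_congr
    intro ω
    constructor
    · rintro ⟨h1, h2, h3⟩
      exact ⟨Prod.ext h1 h2, h3⟩
    · rintro ⟨h1, h3⟩
      exact ⟨by rw [h1], by rw [h1], h3⟩
  -- rewrite hypothesis
  have hyp : ∑ b, ∑ c, ∑ w, |g b c w - r w / nA| ≤ 2 * δ := by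
    have e : ∀ a w, prOf p (fun ω => (UA ω, W ω) = (a, w)) = r w / nA := by
      intro a w
      have : prOf p (fun ω => (UA ω, W ω) = (a, w))
          = prOf p (fun ω => UA ω = a ∧ W ω = w) := by
        apply prOf_congr; intro ω; simp [Prod.ext_iff]
      rw [this, hUAW, hUA]
      ring
    have e2 : ∀ a w, prOf p (fun ω => (S ω, W ω) = (a, w))
        = prOf p (fun ω => S ω = a ∧ W ω = w) := by
      intro a w; apply prOf_congr; intro ω; simp [Prod.ext_iff]
    have hs : ∑ a, ∑ w, |prOf p (fun ω => S ω = a ∧ W ω = w) - r w / nA| ≤ 2 * δ := by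
      have := hSD
      unfold statDist at this
      rw [Fintype.sum_prod_type] at this
      simp only [e, e2] at this
      linarith
    -- reindex a ↦ (b,c) via φ
    have hre1 : ∑ a, ∑ w, |prOf p (fun ω => S ω = a ∧ W ω = w) - r w / nA|
        = ∑ x : B × C, ∑ w, |g x.1 x.2 w - r w / nA| := by
      apply Fintype.sum_equiv (Equiv.ofBijective φ hφ)
      intro a
      apply Finset.sum_congr rfl
      intro w _
      congr 2
      rw [hg]
      apply prOf_congr
      intro ω
      simp only [Equiv.ofBijective_apply, Prod.mk.eta, and_congr_left_iff]
      intro _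
      exact ⟨fun h => by rw [h], fun h => hinj h⟩
    have hre2 : ∑ x : B × C, ∑ w, |g x.1 x.2 w - r w / nA|
        = ∑ b, ∑ c, ∑ w, |g b c w - r w / nA| := Fintype.sum_prod_type _
    rw [hre1, hre2] at hs
    exact hs
  -- rewrite goal
  unfold statDist
  rw [Fintype.sum_prod_type]
  simp only [Fintype.sum_prod_type]
  have e3 : ∀ b c w, prOf p (fun ω => ((φ (S ω)).1, (φ (S ω)).2, W ω) = (b, c, w))
      = g b c w := by
    intro b c w
    rw [hg]
    apply prOf_congr
    intro ω
    simp [Prod.ext_iff, and_assoc]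
  have e4 : ∀ b c w, prOf p (fun ω => (UB ω, (φ (S ω)).2, W ω) = (b, c, w))
      = q c w / nB := by
    intro b c w
    have : prOf p (fun ω => (UB ω, (φ (S ω)).2, W ω) = (b, c, w))
        = prOf p (fun ω => UB ω = b ∧ (φ (S ω)).2 = c ∧ W ω = w) := by
      apply prOf_congr; intro ω; simp [Prod.ext_iff]
    rw [this, hUBFW, hUB]
    show 1 / nB * prOf p (fun ω => (φ (S ω)).2 = c ∧ W ω = w)
        = prOf p (fun ω => (φ (S ω)).2 = c ∧ W ω = w) / nB
    ring
  simp only [e3, e4]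
  -- key middle estimate
  have hmid : ∀ c w, |q c w - r w / nC| ≤ ∑ b, |g b c w - r w / nA| := by
    intro c w
    have hsum : q c w - r w / nC = ∑ b, (g b c w - r w / nA) := by
      rw [Finset.sum_sub_distrib, ← hq, Finset.sum_const, Finset.card_univ]
      rw [hcard]
      rw [nsmul_eq_mul, ← hnB]
      field_simp
    rw [hsum]
    exact Finset.abs_sum_le_sum_abs _ _
  have tri : ∀ b c w, |g b c w - q c w / nB|
      ≤ |g b c w - r w / nA| + (1 / nB) * |q c w - r w / nC| := by
    intro b c w
    have h1 : g b c w - q c w / nB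
        = (g b c w - r w / nA) + (1 / nB) * (r w / nC - q c w) := by
      rw [hcard]; field_simp; ring
    rw [h1]
    refine (abs_add_le _ _).trans ?_
    gcongr
    rw [abs_mul, abs_of_pos (by positivity : (0:ℝ) < 1 / nB), abs_sub_comm]
  have main : ∑ b, ∑ c, ∑ w, |g b c w - q c w / nB| ≤ 4 * δ := by
    calc ∑ b, ∑ c, ∑ w, |g b c w - q c w / nB|
      ≤ ∑ b, ∑ c, ∑ w, (|g b c w - r w / nA| + (1 / nB) * |q c w - r w / nC|) := by
          gcongr with b _ c _ w _; exact tri b c w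
      _ = (∑ b, ∑ c, ∑ w, |g b c w - r w / nA|)
          + nB * ((1 / nB) * ∑ c, ∑ w, |q c w - r w / nC|) := by
          simp only [Finset.sum_add_distrib, ← Finset.mul_sum]
          rw [Finset.sum_const, Finset.card_univ]
          simp [hnB, nsmul_eq_mul]
      _ = (∑ b, ∑ c, ∑ w, |g b c w - r w / nA|) + ∑ c, ∑ w, |q c w - r w / nC| := by
          rw [← mul_assoc, mul_one_div_cancel hnB0.ne', one_mul]
      _ ≤ (∑ b, ∑ c, ∑ w, |g b c w - r w / nA|)
          + ∑ c, ∑ w, ∑ b, |g b c w - r w / nA| := by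
          gcongr with c _ w _; exact hmid c w
      _ = (∑ b, ∑ c, ∑ w, |g b c w - r w / nA|)
          + ∑ b, ∑ c, ∑ w, |g b c w - r w / nA| := by
          congr 1
          have h1 : ∀ c : C, ∑ w, ∑ b, |g b c w - r w / nA|
              = ∑ b, ∑ w, |g b c w - r w / nA| := fun c => Finset.sum_comm
          simp only [h1]
          exact Finset.sum_comm
      _ ≤ 2 * δ + 2 * δ := by linarith
      _ = 4 * δ := by ring
  linarith [main]
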